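/- Every differentiable solution τ ↦ (x1(τ), x2(τ), z5(τ), z6(τ)) of the averaged ESC closed-loop system that is defined for all τ ≥ 0 and satisfies z5(0)² + z6(0)² = 1 has bounded range and converges to the source in average: (x1(τ), x2(τ)) → (0, 0) as τ → ∞. (This is the averaged-system form of the convergence claim of Proposition 2: the averaged shifted positions z̃_{1,avg}, z̃_{2,avg} tend to zero, i.e., the average trajectory of the robot under the ESC-based projected gradient-ascent control law converges to the maximizer of the quadratic potential.) -/

import Mathlib

open Real Filter

/-- The averaged ESC closed-loop system with positive constants `a, k1, k2, ω0, C1, C2, c1, c2`: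
`x1' = −(a k1/ω0) z5 (C1 c1 x1 z5 + C2 c2 x2 z6)`,
`x2' = −(a k1/ω0) z6 (C1 c1 x1 z5 + C2 c2 x2 z6)`,
`z5' = (a k2/ω0) z6 (C1 c1 x1 z6 − C2 c2 x2 z5)`,
`z6' = −(a k2/ω0) z5 (C1 c1 x1 z6 − C2 c2 x2 z5)`, holding for all `τ ∈ s`. -/
def AvgESC (a k1 k2 ω0 C1 C2 c1 c2 : ℝ) (x1 x2 z5 z6 : ℝ → ℝ) (s : Set ℝ) : Prop :=
  ∀ τ ∈ s,
    HasDerivAt x1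
      (-(a * k1 / ω0) * z5 τ * (C1 * c1 * x1 τ * z5 τ + C2 * c2 * x2 τ * z6 τ)) τ ∧
    HasDerivAt x2
      (-(a * k1 / ω0) * z6 τ * (C1 * c1 * x1 τ * z5 τ + C2 * c2 * x2 τ * z6 τ)) τ ∧
    HasDerivAt z5
      ((a * k2 / ω0) * z6 τ * (C1 * c1 * x1 τ * z6 τ - C2 * c2 * x2 τ * z5 τ)) τ ∧
    HasDerivAt z6
      (-(a * k2 / ω0) * z5 τ * (C1 * c1 * x1 τ * z6 τ - C2 * c2 * x2 τ * z5 τ)) τ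

/-- Barbalat-type lemma: a Lipschitz (on `[0,∞)`) function whose sliding-window integrals of
its square tend to zero must itself tend to zero. -/
lemma barbalat_window (f : ℝ → ℝ) (L : ℝ) (hL : 0 ≤ L)
    (hlip : ∀ s ∈ Set.Ici (0:ℝ), ∀ t ∈ Set.Ici (0:ℝ), |f s - f t| ≤ L * |s - t|)
    (hint : ∀ t ≥ (0:ℝ), IntervalIntegrable (fun x => f x ^ 2) MeasureTheory.volume t (t+1))
    (hwin : Tendsto (fun t => ∫ x in t..(t+1), f x ^ 2) atTop (nhds 0)) :
    Tendsto f atTop (nhds 0) := by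
  rw [Metric.tendsto_atTop] at hwin ⊢
  intro ε hε
  set δ : ℝ := min 1 (ε / (2 * L + 2)) with hδdef
  have hden : (0:ℝ) < 2 * L + 2 := by linarith
  have hδpos : 0 < δ := lt_min one_pos (div_pos hε hden)
  have hδ1 : δ ≤ 1 := min_le_left _ _
  have hLδ : L * δ ≤ ε / 2 := by
    have h1 : δ ≤ ε / (2 * L + 2) := min_le_right _ _
    have h2 : L * δ ≤ L * (ε / (2 * L + 2)) := mul_le_mul_of_nonneg_left h1 hL
    have h3 : L * (ε / (2 * L + 2)) ≤ ε / 2 := by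
      rw [mul_div_assoc' L ε _, div_le_div_iff₀ hden two_pos]
      nlinarith
    linarith
  set c : ℝ := δ * (ε / 2) ^ 2 with hcdef
  have hc : 0 < c := by positivity
  obtain ⟨N, hN⟩ := hwin c hc
  refine ⟨max N 0, fun t ht => ?_⟩
  have htN : t ≥ N := le_trans (le_max_left _ _) ht
  have ht0 : (0:ℝ) ≤ t := le_trans (le_max_right _ _) ht
  by_contra hcon
  push_neg at hcon
  rw [Real.dist_eq, sub_zero] at hcon
  have hkey : ∀ x ∈ Set.Icc t (t + δ), (ε/2)^2 ≤ f x ^ 2 := by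
    intro x hx
    have hx0 : (0:ℝ) ≤ x := le_trans ht0 hx.1
    have hlx := hlip x (Set.mem_Ici.mpr hx0) t (Set.mem_Ici.mpr ht0)
    have habs : |x - t| ≤ δ := by
      rw [abs_of_nonneg (by linarith [hx.1])]
      linarith [hx.2]
    have h1 : |f x - f t| ≤ L * δ := le_trans hlx (mul_le_mul_of_nonneg_left habs hL)
    have h2 : ε / 2 ≤ |f x| := by
      have := abs_sub_abs_le_abs_sub (f t) (f x)
      rw [abs_sub_comm (f t) (f x)] at this
      linarith
    calc (ε/2)^2 ≤ |f x| ^ 2 := by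
          apply pow_le_pow_left₀ (by linarith) h2
      _ = f x ^ 2 := sq_abs _
  have hii := hint t ht0
  have hsub1 : IntervalIntegrable (fun x => f x ^ 2) MeasureTheory.volume t (t+δ) := by
    apply hii.mono_set
    rw [Set.uIcc_of_le (by linarith), Set.uIcc_of_le (by linarith)]
    exact Set.Icc_subset_Icc le_rfl (by linarith)
  have hsub2 : IntervalIntegrable (fun x => f x ^ 2) MeasureTheory.volume (t+δ) (t+1) := by
    apply hii.mono_set
    rw [Set.uIcc_of_le (by linarith), Set.uIcc_of_le (by linarith)]
    exact Set.Icc_subset_Icc (by linarith) le_rfl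
  have hlow : c ≤ ∫ x in t..(t+δ), f x ^ 2 := by
    have hconst : ∫ _x in t..(t+δ), (ε/2)^2 = δ * (ε/2)^2 := by
      rw [intervalIntegral.integral_const, smul_eq_mul]
      ring
    calc c = ∫ _x in t..(t+δ), (ε/2)^2 := by rw [hconst]
      _ ≤ ∫ x in t..(t+δ), f x ^ 2 := by
          apply intervalIntegral.integral_mono_on (by linarith) (by simp) hsub1 hkey
  have hrest : 0 ≤ ∫ x in (t+δ)..(t+1), f x ^ 2 :=
    intervalIntegral.integral_nonneg (by linarith) (fun u _ => sq_nonneg _)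
  have hsplit : (∫ x in t..(t+δ), f x ^ 2) + ∫ x in (t+δ)..(t+1), f x ^ 2
      = ∫ x in t..(t+1), f x ^ 2 :=
    intervalIntegral.integral_add_adjacent_intervals hsub1 hsub2
  have h5 := hN t htN
  rw [Real.dist_eq, sub_zero] at h5
  have h6 : ∫ x in t..(t+1), f x ^ 2 < c := lt_of_abs_lt h5
  linarith

set_option maxHeartbeats 2000000 in
/-- Every differentiable solution of the averaged ESC closed-loop system on
`[0,∞)` starting on the unit circle in `(z5, z6)` has bounded range, and the averaged
shifted positions converge to the source: `(x1(τ), x2(τ)) → (0, 0)` as `τ → ∞`. -/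
theorem stmt17 (a k1 k2 ω0 C1 C2 c1 c2 : ℝ)
    (ha : 0 < a) (hk1 : 0 < k1) (hk2 : 0 < k2) (hω0 : 0 < ω0)
    (hC1 : 0 < C1) (hC2 : 0 < C2) (hc1 : 0 < c1) (hc2 : 0 < c2)
    (x1 x2 z5 z6 : ℝ → ℝ)
    (hsol : AvgESC a k1 k2 ω0 C1 C2 c1 c2 x1 x2 z5 z6 (Set.Ici 0))
    (hinit : z5 0 ^ 2 + z6 0 ^ 2 = 1) :
    (∃ C : ℝ, ∀ τ ≥ (0 : ℝ), ‖(x1 τ, x2 τ, z5 τ, z6 τ)‖ ≤ C) ∧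
      Tendsto (fun τ => (x1 τ, x2 τ)) atTop (nhds ((0 : ℝ), (0 : ℝ))) := by
  have hγ : 0 < a * k1 / ω0 := by positivity
  have hβ : 0 < a * k2 / ω0 := by positivity
  set S : ℝ → ℝ := fun τ => C1 * c1 * x1 τ * z5 τ + C2 * c2 * x2 τ * z6 τ with hSdef
  set T : ℝ → ℝ := fun τ => C1 * c1 * x1 τ * z6 τ - C2 * c2 * x2 τ * z5 τ with hTdef
  set V : ℝ → ℝ := fun τ => C1 * c1 * x1 τ ^ 2 + C2 * c2 * x2 τ ^ 2 with hVdef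
  -- continuity
  have hcx1 : ContinuousOn x1 (Set.Ici 0) :=
    fun τ hτ => ((hsol τ hτ).1.continuousAt).continuousWithinAt
  have hcx2 : ContinuousOn x2 (Set.Ici 0) :=
    fun τ hτ => ((hsol τ hτ).2.1.continuousAt).continuousWithinAt
  have hcz5 : ContinuousOn z5 (Set.Ici 0) :=
    fun τ hτ => ((hsol τ hτ).2.2.1.continuousAt).continuousWithinAt
  have hcz6 : ContinuousOn z6 (Set.Ici 0) :=
    fun τ hτ => ((hsol τ hτ).2.2.2.continuousAt).continuousWithinAt
  have hcS : ContinuousOn S (Set.Ici 0) := by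
    rw [hSdef]
    exact ((continuousOn_const.mul hcx1).mul hcz5).add ((continuousOn_const.mul hcx2).mul hcz6)
  have hcT : ContinuousOn T (Set.Ici 0) := by
    rw [hTdef]
    exact ((continuousOn_const.mul hcx1).mul hcz6).sub ((continuousOn_const.mul hcx2).mul hcz5)
  have hcS2 : ContinuousOn (fun x => S x ^ 2) (Set.Ici 0) := hcS.pow 2
  have hcT2 : ContinuousOn (fun x => T x ^ 2) (Set.Ici 0) := hcT.pow 2
  -- unit circle invariance
  have hunit : ∀ τ ∈ Set.Ici (0:ℝ), z5 τ ^ 2 + z6 τ ^ 2 = 1 := by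
    intro τ hτ
    have hN : ∀ x ∈ Set.Ici (0:ℝ), HasDerivAt (fun y => z5 y ^ 2 + z6 y ^ 2) 0 x := by
      intro x hx
      obtain ⟨h1, h2, h3, h4⟩ := hsol x hx
      have hd : HasDerivAt (fun y => z5 y ^ 2 + z6 y ^ 2) _ x := (h3.pow 2).add (h4.pow 2)
      convert hd using 1
      ring
    have hconst := constant_of_has_deriv_right_zero
      (f := fun y => z5 y ^ 2 + z6 y ^ 2) (a := 0) (b := τ)
      (((hcz5.mono (Set.Icc_subset_Ici_self)).pow 2).add
        ((hcz6.mono (Set.Icc_subset_Ici_self)).pow 2))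
      (fun x hx => (hN x hx.1).hasDerivWithinAt)
      τ ⟨Set.mem_Ici.mp hτ, le_rfl⟩
    exact hconst.trans hinit
  -- derivative facts
  have hVderiv : ∀ x ∈ Set.Ici (0:ℝ),
      HasDerivAt V (-(2 * (a * k1 / ω0)) * S x ^ 2) x := by
    intro x hx
    obtain ⟨h1, h2, h3, h4⟩ := hsol x hx
    have hd : HasDerivAt (fun τ => C1 * c1 * x1 τ ^ 2 + C2 * c2 * x2 τ ^ 2) _ x := ((h1.pow 2).const_mul (C1 * c1)).add ((h2.pow 2).const_mul (C2 * c2))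
    simp only [hVdef, hSdef]
    convert hd using 1
    ring
  have hSderiv : ∀ x ∈ Set.Ici (0:ℝ), HasDerivAt S
      (-(a*k1/ω0 * (C1*c1) * z5 x ^ 2 + a*k1/ω0 * (C2*c2) * z6 x ^ 2) * S x
        + (a*k2/ω0) * T x ^ 2) x := by
    intro x hx
    obtain ⟨h1, h2, h3, h4⟩ := hsol x hx
    have hd : HasDerivAt (fun τ => C1 * c1 * x1 τ * z5 τ + C2 * c2 * x2 τ * z6 τ) _ x := (((h1.const_mul (C1*c1)).mul h3).add ((h2.const_mul (C2*c2)).mul h4))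
    simp only [hSdef, hTdef]
    convert hd using 1
    ring
  have hTderiv : ∀ x ∈ Set.Ici (0:ℝ), HasDerivAt T
      ((a*k1/ω0 * (C2*c2) - a*k1/ω0 * (C1*c1)) * (z5 x * z6 x) * S x
        - (a*k2/ω0) * (T x * S x)) x := by
    intro x hx
    obtain ⟨h1, h2, h3, h4⟩ := hsol x hx
    have hd : HasDerivAt (fun τ => C1 * c1 * x1 τ * z6 τ - C2 * c2 * x2 τ * z5 τ) _ x := (((h1.const_mul (C1*c1)).mul h4).sub ((h2.const_mul (C2*c2)).mul h3))
    simp only [hSdef, hTdef]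
    convert hd using 1
    ring
  -- the integral G of S² and the energy identity
  set G : ℝ → ℝ := fun t => ∫ x in (0:ℝ)..t, S x ^ 2 with hGdef
  have hSint : ∀ s t : ℝ, 0 ≤ s → s ≤ t →
      IntervalIntegrable (fun x => S x ^ 2) MeasureTheory.volume s t := by
    intro s t hs hst
    exact (hcS2.mono (by rw [Set.uIcc_of_le hst]; exact fun y hy => le_trans hs hy.1)).intervalIntegrable
  have hTint : ∀ s t : ℝ, 0 ≤ s → s ≤ t →
      IntervalIntegrable (fun x => T x ^ 2) MeasureTheory.volume s t := by
    intro s t hs hst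
    exact (hcT2.mono (by rw [Set.uIcc_of_le hst]; exact fun y hy => le_trans hs hy.1)).intervalIntegrable
  have hVG : ∀ t ≥ (0:ℝ), V t = V 0 - 2 * (a * k1 / ω0) * G t := by
    intro t ht
    have hFTC := intervalIntegral.integral_eq_sub_of_hasDerivAt
      (f := V) (f' := fun x => -(2 * (a * k1 / ω0)) * S x ^ 2) (a := 0) (b := t)
      (fun x hx => hVderiv x (by rw [Set.uIcc_of_le ht] at hx; exact Set.mem_Ici.mpr hx.1))
      (by
        apply ContinuousOn.intervalIntegrable
        apply ContinuousOn.mul continuousOn_const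
        apply hcS2.mono
        rw [Set.uIcc_of_le ht]; exact fun y hy => hy.1)
    rw [intervalIntegral.integral_const_mul] at hFTC
    simp only [hGdef]
    linarith [hFTC]
  have hGnn : ∀ t ≥ (0:ℝ), 0 ≤ G t := fun t ht =>
    intervalIntegral.integral_nonneg ht (fun u _ => sq_nonneg _)
  have hVnn : ∀ t, 0 ≤ V t := by
    intro t; simp only [hVdef]; positivity
  have hVle : ∀ t ≥ (0:ℝ), V t ≤ V 0 := by
    intro t ht
    have h1 := hVG t ht
    have h2 := hGnn t ht
    have h3 : 0 ≤ (a * k1 / ω0) * G t := mul_nonneg (le_of_lt hγ) h2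
    clear_value V G S T
    linarith only [h1, h3]
  have hGadd : ∀ s t : ℝ, 0 ≤ s → s ≤ t → G s + (∫ x in s..t, S x ^ 2) = G t := by
    intro s t hs hst
    simp only [hGdef]
    exact intervalIntegral.integral_add_adjacent_intervals (hSint 0 s le_rfl hs) (hSint s t hs hst)
  have hGmono : ∀ s t : ℝ, 0 ≤ s → s ≤ t → G s ≤ G t := by
    intro s t hs hst
    have h1 := hGadd s t hs hst
    have h2 : 0 ≤ ∫ x in s..t, S x ^ 2 :=
      intervalIntegral.integral_nonneg hst (fun u _ => sq_nonneg _)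
    linarith
  have hGbd : ∀ t ≥ (0:ℝ), G t ≤ V 0 / (2 * (a * k1 / ω0)) := by
    intro t ht
    rw [le_div_iff₀ (by positivity)]
    have h1 := hVG t ht
    have h2 := hVnn t
    clear_value V G S T
    linarith only [h1, h2]
  -- uniform bounds on S, T, z5, z6
  set K : ℝ := max (C1 * c1) (C2 * c2) with hKdef
  have hK1 : C1 * c1 ≤ K := le_max_left _ _
  have hK2 : C2 * c2 ≤ K := le_max_right _ _
  have hKpos : 0 < K := lt_of_lt_of_le (by positivity) hK1
  set M : ℝ := Real.sqrt (K * V 0) with hMdef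
  have hM0 : 0 ≤ M := Real.sqrt_nonneg _
  have hST2 : ∀ τ ∈ Set.Ici (0:ℝ), S τ ^ 2 + T τ ^ 2 ≤ K * V 0 := by
    intro τ hτ
    have hu := hunit τ hτ
    have hVτ := hVle τ hτ
    have hid : S τ ^ 2 + T τ ^ 2 = (C1*c1*x1 τ)^2 + (C2*c2*x2 τ)^2 := by
      simp only [hSdef, hTdef]
      linear_combination ((C1*c1*x1 τ)^2 + (C2*c2*x2 τ)^2) * hu
    have hle : (C1*c1*x1 τ)^2 + (C2*c2*x2 τ)^2 ≤ K * V τ := by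
      simp only [hVdef]
      nlinarith [mul_le_mul_of_nonneg_right hK1
          (mul_nonneg (le_of_lt (mul_pos hC1 hc1)) (sq_nonneg (x1 τ))),
        mul_le_mul_of_nonneg_right hK2
          (mul_nonneg (le_of_lt (mul_pos hC2 hc2)) (sq_nonneg (x2 τ)))]
    have hKV : K * V τ ≤ K * V 0 := mul_le_mul_of_nonneg_left hVτ hKpos.le
    linarith
  have hSb : ∀ τ ∈ Set.Ici (0:ℝ), |S τ| ≤ M := by
    intro τ hτ
    have h := hST2 τ hτ
    have h2 : S τ ^ 2 ≤ K * V 0 := by nlinarith [sq_nonneg (T τ)]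
    calc |S τ| = Real.sqrt (S τ ^ 2) := (Real.sqrt_sq_eq_abs _).symm
      _ ≤ M := Real.sqrt_le_sqrt h2
  have hTb : ∀ τ ∈ Set.Ici (0:ℝ), |T τ| ≤ M := by
    intro τ hτ
    have h := hST2 τ hτ
    have h2 : T τ ^ 2 ≤ K * V 0 := by nlinarith [sq_nonneg (S τ)]
    calc |T τ| = Real.sqrt (T τ ^ 2) := (Real.sqrt_sq_eq_abs _).symm
      _ ≤ M := Real.sqrt_le_sqrt h2
  have hzb : ∀ τ ∈ Set.Ici (0:ℝ), |z5 τ| ≤ 1 ∧ |z6 τ| ≤ 1 := by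
    intro τ hτ
    have hu := hunit τ hτ
    constructor
    · rw [abs_le]
      constructor <;> nlinarith [sq_nonneg (z5 τ + 1), sq_nonneg (z5 τ - 1), sq_nonneg (z6 τ)]
    · rw [abs_le]
      constructor <;> nlinarith [sq_nonneg (z6 τ + 1), sq_nonneg (z6 τ - 1), sq_nonneg (z5 τ)]
  have hz5sq : ∀ τ ∈ Set.Ici (0:ℝ), z5 τ ^ 2 ≤ 1 := by
    intro τ hτ; nlinarith [hunit τ hτ, sq_nonneg (z6 τ)]
  have hz6sq : ∀ τ ∈ Set.Ici (0:ℝ), z6 τ ^ 2 ≤ 1 := by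
    intro τ hτ; nlinarith [hunit τ hτ, sq_nonneg (z5 τ)]
  -- Lipschitz constants
  set L0 : ℝ := (a*k1/ω0) * (C1*c1 + C2*c2) * M + (a*k2/ω0) * M^2 with hL0def
  have hL0 : 0 ≤ L0 := by rw [hL0def]; positivity
  have hSbound : ∀ x ∈ Set.Ici (0:ℝ),
      ‖-(a*k1/ω0 * (C1*c1) * z5 x ^ 2 + a*k1/ω0 * (C2*c2) * z6 x ^ 2) * S x
        + (a*k2/ω0) * T x ^ 2‖ ≤ L0 := by
    intro x hx
    have hSx := hSb x hx
    have hTx := hTb x hx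
    have hz5x := hz5sq x hx
    have hz6x := hz6sq x hx
    rw [Real.norm_eq_abs]
    have h1 : |(-(a*k1/ω0 * (C1*c1) * z5 x ^ 2 + a*k1/ω0 * (C2*c2) * z6 x ^ 2) * S x)|
        ≤ (a*k1/ω0) * (C1*c1 + C2*c2) * M := by
      rw [abs_mul]
      have hw : |(-(a*k1/ω0 * (C1*c1) * z5 x ^ 2 + a*k1/ω0 * (C2*c2) * z6 x ^ 2))|
          ≤ (a*k1/ω0) * (C1*c1 + C2*c2) := by
        rw [abs_neg, abs_of_nonneg (by positivity)]
        nlinarith [mul_le_mul_of_nonneg_left hz5x (by positivity : (0:ℝ) ≤ a*k1/ω0 * (C1*c1)),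
          mul_le_mul_of_nonneg_left hz6x (by positivity : (0:ℝ) ≤ a*k1/ω0 * (C2*c2))]
      exact mul_le_mul hw hSx (abs_nonneg _) (by positivity)
    have h2 : |(a*k2/ω0) * T x ^ 2| ≤ (a*k2/ω0) * M^2 := by
      rw [abs_mul, abs_of_nonneg (le_of_lt hβ), abs_of_nonneg (sq_nonneg _)]
      have hTM : T x ^ 2 ≤ M ^ 2 := by nlinarith [sq_abs (T x), abs_nonneg (T x)]
      exact mul_le_mul_of_nonneg_left hTM (le_of_lt hβ)
    calc |(-(a*k1/ω0 * (C1*c1) * z5 x ^ 2 + a*k1/ω0 * (C2*c2) * z6 x ^ 2) * S x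
          + (a*k2/ω0) * T x ^ 2)|
        ≤ |(-(a*k1/ω0 * (C1*c1) * z5 x ^ 2 + a*k1/ω0 * (C2*c2) * z6 x ^ 2) * S x)|
          + |(a*k2/ω0) * T x ^ 2| := abs_add_le _ _
      _ ≤ L0 := by rw [hL0def]; linarith
  have hTbound : ∀ x ∈ Set.Ici (0:ℝ),
      ‖(a*k1/ω0 * (C2*c2) - a*k1/ω0 * (C1*c1)) * (z5 x * z6 x) * S x
        - (a*k2/ω0) * (T x * S x)‖ ≤ L0 := by
    intro x hx
    have hSx := hSb x hx
    have hTx := hTb x hx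
    have hz5x := (hzb x hx).1
    have hz6x := (hzb x hx).2
    rw [Real.norm_eq_abs]
    have h1 : |(a*k1/ω0 * (C2*c2) - a*k1/ω0 * (C1*c1)) * (z5 x * z6 x) * S x|
        ≤ (a*k1/ω0) * (C1*c1 + C2*c2) * M := by
      rw [abs_mul, abs_mul]
      have hd1 : |(a*k1/ω0 * (C2*c2) - a*k1/ω0 * (C1*c1))| ≤ (a*k1/ω0) * (C1*c1 + C2*c2) := by
        rw [abs_le]
        constructor <;> nlinarith [mul_pos (mul_pos ha hk1) (mul_pos hC1 hc1),
          mul_pos (mul_pos ha hk1) (mul_pos hC2 hc2), hγ, mul_pos hC1 hc1, mul_pos hC2 hc2]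
      have hd2 : |z5 x * z6 x| ≤ 1 := by
        rw [abs_mul]
        exact mul_le_one₀ hz5x (abs_nonneg _) hz6x
      calc |(a*k1/ω0 * (C2*c2) - a*k1/ω0 * (C1*c1))| * |z5 x * z6 x| * |S x|
          ≤ ((a*k1/ω0) * (C1*c1 + C2*c2)) * 1 * M := by
            apply mul_le_mul _ hSx (abs_nonneg _) (by positivity)
            exact mul_le_mul hd1 hd2 (abs_nonneg _) (by positivity)
        _ = (a*k1/ω0) * (C1*c1 + C2*c2) * M := by ring
    have h2 : |(a*k2/ω0) * (T x * S x)| ≤ (a*k2/ω0) * M^2 := by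
      rw [abs_mul, abs_mul]
      have : |T x| * |S x| ≤ M * M := mul_le_mul hTx hSx (abs_nonneg _) hM0
      calc |(a*k2/ω0)| * (|T x| * |S x|) ≤ (a*k2/ω0) * (M * M) := by
            rw [abs_of_nonneg (le_of_lt hβ)]
            exact mul_le_mul_of_nonneg_left this (le_of_lt hβ)
        _ = (a*k2/ω0) * M^2 := by ring
    calc |((a*k1/ω0 * (C2*c2) - a*k1/ω0 * (C1*c1)) * (z5 x * z6 x) * S x
          - (a*k2/ω0) * (T x * S x))|
        ≤ |(a*k1/ω0 * (C2*c2) - a*k1/ω0 * (C1*c1)) * (z5 x * z6 x) * S x|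
          + |(a*k2/ω0) * (T x * S x)| := abs_sub _ _
      _ ≤ L0 := by rw [hL0def]; linarith
  have hSlip : ∀ s ∈ Set.Ici (0:ℝ), ∀ t ∈ Set.Ici (0:ℝ), |S s - S t| ≤ L0 * |s - t| := by
    intro s hs t ht
    have := Convex.norm_image_sub_le_of_norm_hasDerivWithin_le
      (f := S)
      (f' := fun x => -(a*k1/ω0 * (C1*c1) * z5 x ^ 2 + a*k1/ω0 * (C2*c2) * z6 x ^ 2) * S x
        + (a*k2/ω0) * T x ^ 2)
      (s := Set.Ici (0:ℝ)) (C := L0)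
      (fun x hx => (hSderiv x hx).hasDerivWithinAt) hSbound (convex_Ici 0) ht hs
    simpa [Real.norm_eq_abs] using this
  have hTlip : ∀ s ∈ Set.Ici (0:ℝ), ∀ t ∈ Set.Ici (0:ℝ), |T s - T t| ≤ L0 * |s - t| := by
    intro s hs t ht
    have := Convex.norm_image_sub_le_of_norm_hasDerivWithin_le
      (f := T)
      (f' := fun x => (a*k1/ω0 * (C2*c2) - a*k1/ω0 * (C1*c1)) * (z5 x * z6 x) * S x
        - (a*k2/ω0) * (T x * S x))
      (s := Set.Ici (0:ℝ)) (C := L0)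
      (fun x hx => (hTderiv x hx).hasDerivWithinAt) hTbound (convex_Ici 0) ht hs
    simpa [Real.norm_eq_abs] using this
  -- window integrals of S² tend to 0
  have hwinS : Tendsto (fun t => ∫ x in t..(t+1), S x ^ 2) atTop (nhds 0) := by
    rw [Metric.tendsto_atTop]
    intro ε hε
    have hne : (G '' Set.Ici 0).Nonempty := ⟨G 0, 0, Set.mem_Ici.mpr le_rfl, rfl⟩
    have hbdd : BddAbove (G '' Set.Ici 0) := by
      refine ⟨V 0 / (2 * (a * k1 / ω0)), ?_⟩
      rintro y ⟨t, ht, rfl⟩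
      exact hGbd t ht
    obtain ⟨y, ⟨t₀, ht₀, rfl⟩, hy⟩ := exists_lt_of_lt_csSup hne
      (show sSup (G '' Set.Ici 0) - ε < sSup (G '' Set.Ici 0) by linarith)
    refine ⟨t₀, fun t ht => ?_⟩
    have ht₀' : (0:ℝ) ≤ t₀ := ht₀
    have ht0 : (0:ℝ) ≤ t := le_trans ht₀' ht
    have h1 : G t₀ ≤ G t := hGmono t₀ t ht₀' ht
    have h2 : G (t+1) ≤ sSup (G '' Set.Ici 0) :=
      le_csSup hbdd ⟨t+1, Set.mem_Ici.mpr (by linarith), rfl⟩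
    have h3 := hGadd t (t+1) ht0 (by linarith)
    have h4 : 0 ≤ ∫ x in t..(t+1), S x ^ 2 :=
      intervalIntegral.integral_nonneg (by linarith) (fun u _ => sq_nonneg _)
    rw [Real.dist_eq, sub_zero, abs_of_nonneg h4]
    linarith
  -- Barbalat: S → 0
  have hS0 : Tendsto S atTop (nhds 0) :=
    barbalat_window S L0 hL0 hSlip (fun t ht => hSint t (t+1) ht (by linarith)) hwinS
  -- window integrals of T² tend to 0
  have hwinT : Tendsto (fun t => ∫ x in t..(t+1), T x ^ 2) atTop (nhds 0) := by
    rw [Metric.tendsto_atTop]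
    intro ε hε
    set wmax : ℝ := (a*k1/ω0) * (C1*c1 + C2*c2) with hwmaxdef
    have hwmax : 0 < wmax := by rw [hwmaxdef]; positivity
    set ε' : ℝ := (a*k2/ω0) * ε / (2 * (2 + wmax)) with hε'def
    have hε'pos : 0 < ε' := by rw [hε'def]; positivity
    have hS0' := hS0
    rw [Metric.tendsto_atTop] at hS0'
    obtain ⟨N, hN⟩ := hS0' ε' hε'pos
    refine ⟨max N 0, fun t ht => ?_⟩
    have htN : N ≤ t := le_trans (le_max_left _ _) ht
    have ht0 : (0:ℝ) ≤ t := le_trans (le_max_right _ _) ht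
    have ht1 : t ≤ t + 1 := by linarith
    have hmemIcc : ∀ x ∈ Set.uIcc t (t+1), x ∈ Set.Ici (0:ℝ) := by
      intro x hx
      rw [Set.uIcc_of_le ht1] at hx
      exact Set.mem_Ici.mpr (le_trans ht0 hx.1)
    have hcw : ContinuousOn (fun x =>
        -(a*k1/ω0 * (C1*c1) * z5 x ^ 2 + a*k1/ω0 * (C2*c2) * z6 x ^ 2) * S x) (Set.Ici 0) := by
      apply ContinuousOn.mul _ hcS
      apply ContinuousOn.neg
      exact ((continuousOn_const.mul (hcz5.pow 2))).add ((continuousOn_const.mul (hcz6.pow 2)))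
    have hint1 : IntervalIntegrable (fun x =>
        -(a*k1/ω0 * (C1*c1) * z5 x ^ 2 + a*k1/ω0 * (C2*c2) * z6 x ^ 2) * S x)
        MeasureTheory.volume t (t+1) :=
      (hcw.mono hmemIcc).intervalIntegrable
    have hint2 : IntervalIntegrable (fun x => (a*k2/ω0) * T x ^ 2)
        MeasureTheory.volume t (t+1) :=
      ((continuousOn_const.mul hcT2).mono hmemIcc).intervalIntegrable
    have hFTC := intervalIntegral.integral_eq_sub_of_hasDerivAt
      (f := S)
      (f' := fun x => -(a*k1/ω0 * (C1*c1) * z5 x ^ 2 + a*k1/ω0 * (C2*c2) * z6 x ^ 2) * S x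
        + (a*k2/ω0) * T x ^ 2) (a := t) (b := t+1)
      (fun x hx => hSderiv x (hmemIcc x hx))
      (hint1.add hint2)
    rw [intervalIntegral.integral_add hint1 hint2, intervalIntegral.integral_const_mul] at hFTC
    have hA : |∫ x in t..(t+1),
        -(a*k1/ω0 * (C1*c1) * z5 x ^ 2 + a*k1/ω0 * (C2*c2) * z6 x ^ 2) * S x| ≤ wmax * ε' := by
      have := intervalIntegral.norm_integral_le_of_norm_le_const (a := t) (b := t+1)
        (C := wmax * ε')
        (f := fun x => -(a*k1/ω0 * (C1*c1) * z5 x ^ 2 + a*k1/ω0 * (C2*c2) * z6 x ^ 2) * S x)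
        (by
          intro x hx
          rw [Set.uIoc_of_le ht1] at hx
          have hx0 : x ∈ Set.Ici (0:ℝ) := Set.mem_Ici.mpr (le_trans ht0 (le_of_lt hx.1))
          have hSsmall : |S x| ≤ ε' := by
            have := hN x (le_trans htN (le_of_lt hx.1))
            rw [Real.dist_eq, sub_zero] at this
            exact le_of_lt this
          have hz5x := hz5sq x hx0
          have hz6x := hz6sq x hx0
          rw [Real.norm_eq_abs, abs_mul]
          have hw : |(-(a*k1/ω0 * (C1*c1) * z5 x ^ 2 + a*k1/ω0 * (C2*c2) * z6 x ^ 2))| ≤ wmax := by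
            rw [abs_neg, abs_of_nonneg (by positivity), hwmaxdef]
            nlinarith [mul_le_mul_of_nonneg_left hz5x (by positivity : (0:ℝ) ≤ a*k1/ω0 * (C1*c1)),
              mul_le_mul_of_nonneg_left hz6x (by positivity : (0:ℝ) ≤ a*k1/ω0 * (C2*c2))]
          exact mul_le_mul hw hSsmall (abs_nonneg _) (le_of_lt hwmax))
      rw [Real.norm_eq_abs] at this
      calc |∫ x in t..(t+1),
          -(a*k1/ω0 * (C1*c1) * z5 x ^ 2 + a*k1/ω0 * (C2*c2) * z6 x ^ 2) * S x|
          ≤ wmax * ε' * |t + 1 - t| := this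
        _ = wmax * ε' := by simp
    have hSt : |S t| ≤ ε' := by
      have := hN t htN
      rw [Real.dist_eq, sub_zero] at this
      exact le_of_lt this
    have hSt1 : |S (t+1)| ≤ ε' := by
      have := hN (t+1) (by linarith)
      rw [Real.dist_eq, sub_zero] at this
      exact le_of_lt this
    have hITnn : 0 ≤ ∫ x in t..(t+1), T x ^ 2 :=
      intervalIntegral.integral_nonneg (by linarith) (fun u _ => sq_nonneg _)
    have hkey : (a*k2/ω0) * (∫ x in t..(t+1), T x ^ 2) ≤ (2 + wmax) * ε' := by
      have e1 : (a*k2/ω0) * (∫ x in t..(t+1), T x ^ 2)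
          = S (t+1) - S t - ∫ x in t..(t+1),
            -(a*k1/ω0 * (C1*c1) * z5 x ^ 2 + a*k1/ω0 * (C2*c2) * z6 x ^ 2) * S x := by
        linarith [hFTC]
      rw [e1]
      have b1 := le_abs_self (S (t+1))
      have b2 := neg_abs_le (S t)
      have b3 := neg_abs_le (∫ x in t..(t+1),
        -(a*k1/ω0 * (C1*c1) * z5 x ^ 2 + a*k1/ω0 * (C2*c2) * z6 x ^ 2) * S x)
      clear_value V G S T L0 K M wmax ε'
      linarith only [b1, b2, b3, hA, hSt, hSt1]
    have heq : (2 + wmax) * ε' = (a*k2/ω0) * (ε/2) := by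
      rw [hε'def]
      field_simp
    rw [heq] at hkey
    have hfin : (∫ x in t..(t+1), T x ^ 2) ≤ ε/2 := by
      nlinarith [hβ]
    rw [Real.dist_eq, sub_zero, abs_of_nonneg hITnn]
    linarith
  -- Barbalat: T → 0
  have hT0 : Tendsto T atTop (nhds 0) :=
    barbalat_window T L0 hL0 hTlip (fun t ht => hTint t (t+1) ht (by linarith)) hwinT
  -- recover x1, x2 from S, T
  have hx1id : ∀ τ ∈ Set.Ici (0:ℝ), C1 * c1 * x1 τ = S τ * z5 τ + T τ * z6 τ := by
    intro τ hτ
    have hu := hunit τ hτ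
    simp only [hSdef, hTdef]
    linear_combination (-(C1 * c1 * x1 τ)) * hu
  have hx2id : ∀ τ ∈ Set.Ici (0:ℝ), C2 * c2 * x2 τ = S τ * z6 τ - T τ * z5 τ := by
    intro τ hτ
    have hu := hunit τ hτ
    simp only [hSdef, hTdef]
    linear_combination (-(C2 * c2 * x2 τ)) * hu
  have hgx : Tendsto (fun τ => (|S τ| + |T τ|) / (C1*c1)) atTop (nhds 0) := by
    have h := (hS0.abs.add hT0.abs).div_const (C1*c1)
    simpa using h
  have hgx2 : Tendsto (fun τ => (|S τ| + |T τ|) / (C2*c2)) atTop (nhds 0) := by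
    have h := (hS0.abs.add hT0.abs).div_const (C2*c2)
    simpa using h
  have habsle : ∀ τ ∈ Set.Ici (0:ℝ),
      |S τ * z5 τ + T τ * z6 τ| ≤ |S τ| + |T τ| ∧
      |S τ * z6 τ - T τ * z5 τ| ≤ |S τ| + |T τ| := by
    intro τ hτ
    obtain ⟨h5, h6⟩ := hzb τ hτ
    constructor
    · calc |S τ * z5 τ + T τ * z6 τ| ≤ |S τ * z5 τ| + |T τ * z6 τ| := abs_add_le _ _
        _ ≤ |S τ| + |T τ| := by
          rw [abs_mul, abs_mul]
          have e1 := mul_le_of_le_one_right (abs_nonneg (S τ)) h5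
          have e2 := mul_le_of_le_one_right (abs_nonneg (T τ)) h6
          linarith
    · calc |S τ * z6 τ - T τ * z5 τ| ≤ |S τ * z6 τ| + |T τ * z5 τ| := abs_sub _ _
        _ ≤ |S τ| + |T τ| := by
          rw [abs_mul, abs_mul]
          have e1 := mul_le_of_le_one_right (abs_nonneg (S τ)) h6
          have e2 := mul_le_of_le_one_right (abs_nonneg (T τ)) h5
          linarith
  have hx1tend : Tendsto x1 atTop (nhds 0) := by
    apply squeeze_zero_norm' (a := fun τ => (|S τ| + |T τ|) / (C1*c1)) _ hgx
    filter_upwards [eventually_ge_atTop (0:ℝ)] with τ hτ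
    have hid := hx1id τ (Set.mem_Ici.mpr hτ)
    have hb := (habsle τ (Set.mem_Ici.mpr hτ)).1
    rw [Real.norm_eq_abs, le_div_iff₀ (by positivity : (0:ℝ) < C1*c1)]
    have : |C1 * c1 * x1 τ| ≤ |S τ| + |T τ| := by rw [hid]; exact hb
    rw [abs_mul, abs_of_nonneg (by positivity : (0:ℝ) ≤ C1*c1)] at this
    nlinarith [abs_nonneg (x1 τ)]
  have hx2tend : Tendsto x2 atTop (nhds 0) := by
    apply squeeze_zero_norm' (a := fun τ => (|S τ| + |T τ|) / (C2*c2)) _ hgx2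
    filter_upwards [eventually_ge_atTop (0:ℝ)] with τ hτ
    have hid := hx2id τ (Set.mem_Ici.mpr hτ)
    have hb := (habsle τ (Set.mem_Ici.mpr hτ)).2
    rw [Real.norm_eq_abs, le_div_iff₀ (by positivity : (0:ℝ) < C2*c2)]
    have : |C2 * c2 * x2 τ| ≤ |S τ| + |T τ| := by rw [hid]; exact hb
    rw [abs_mul, abs_of_nonneg (by positivity : (0:ℝ) ≤ C2*c2)] at this
    nlinarith [abs_nonneg (x2 τ)]
  -- boundedness
  refine ⟨⟨max (Real.sqrt (V 0 / (C1*c1))) (max (Real.sqrt (V 0 / (C2*c2))) 1), ?_⟩,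
    hx1tend.prodMk_nhds hx2tend⟩
  intro τ hτ
  have hτ' : τ ∈ Set.Ici (0:ℝ) := Set.mem_Ici.mpr hτ
  have hVτ := hVle τ hτ
  have hVeq : V τ = C1*c1*x1 τ^2 + C2*c2*x2 τ^2 := by simp only [hVdef]
  have hx1b : |x1 τ| ≤ Real.sqrt (V 0 / (C1*c1)) := by
    have h1 : x1 τ ^ 2 ≤ V 0 / (C1*c1) := by
      rw [le_div_iff₀ (by positivity : (0:ℝ) < C1*c1)]
      nlinarith [sq_nonneg (x2 τ), mul_pos hC2 hc2]
    calc |x1 τ| = Real.sqrt (x1 τ ^ 2) := (Real.sqrt_sq_eq_abs _).symm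
      _ ≤ _ := Real.sqrt_le_sqrt h1
  have hx2b : |x2 τ| ≤ Real.sqrt (V 0 / (C2*c2)) := by
    have h1 : x2 τ ^ 2 ≤ V 0 / (C2*c2) := by
      rw [le_div_iff₀ (by positivity : (0:ℝ) < C2*c2)]
      nlinarith [sq_nonneg (x1 τ), mul_pos hC1 hc1]
    calc |x2 τ| = Real.sqrt (x2 τ ^ 2) := (Real.sqrt_sq_eq_abs _).symm
      _ ≤ _ := Real.sqrt_le_sqrt h1
  obtain ⟨hz5b, hz6b⟩ := hzb τ hτ'
  simp only [Prod.norm_def, Real.norm_eq_abs]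
  apply max_le
  · exact le_max_left _ _ |>.trans' hx1b
  apply max_le
  · exact le_trans hx2b (le_trans (le_max_left _ _) (le_max_right _ _))
  apply max_le
  · exact le_trans hz5b (le_trans (le_max_right _ _) (le_max_right _ _))
  · exact le_trans hz6b (le_trans (le_max_right _ _) (le_max_right _ _))
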